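/- For formula graphs G and G', define PropG(G) = {[H]_≅ : H is a formula graph embeddable into G}, where [H]_≅ is the isomorphism class. Then PropG(G) = PropG(G') if and only if G ≅ G'. -/

import Mathlib

/-- A finite signature: finitely many sorts, first-order predicate symbols with
sorted finite arities, second-order relation symbols with finite arities, finitely
many constants per sort, countably infinitely many variables per sort, and no
function symbols. -/
structure Signature where
  Srt : Type
  Pred : Type
  Rel : Type
  sortFinite : Finite Srt
  predFinite : Finite Pred
  relFinite : Finite Rel
  parity : Pred → ℕ
  psort : (p : Pred) → Fin (parity p) → Srt
  rarity : Rel → ℕ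
  Const : Srt → Type
  constFinite : ∀ σ, Finite (Const σ)
  Var : Srt → Type
  varCountable : ∀ σ, Countable (Var σ)
  varInfinite : ∀ σ, Infinite (Var σ)

namespace Signature

/-- First-order terms of sort `σ`: constants and variables. -/
def Term (S : Signature) (σ : S.Srt) : Type := S.Const σ ⊕ S.Var σ

/-- A first-order literal: a predicate symbol, a polarity, and sorted arguments. -/
structure Literal (S : Signature) where
  pred : S.Pred
  pol : Bool
  args : (i : Fin (S.parity pred)) → S.Term (S.psort pred i)

/-- A formula graph: a finite set `V` of literals together with, for each
second-order relation symbol `R`, a set of tuples from `V` of length the arity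
of `R`. -/
structure FormulaGraph (S : Signature) where
  V : Set (Literal S)
  Vfin : V.Finite
  E : (R : S.Rel) → Set (Fin (S.rarity R) → Literal S)
  E_mem : ∀ R t, t ∈ E R → ∀ i, t i ∈ V

/-- The order of a formula graph: the number of its vertices. -/
noncomputable def FormulaGraph.order {S : Signature} (G : FormulaGraph S) : ℕ := G.V.ncard

/-- Applying a sort-indexed substitution to a literal. -/
def Literal.map {S : Signature} (α : ∀ σ, S.Term σ → S.Term σ) (l : Literal S) :
    Literal S :=
  ⟨l.pred, l.pol, fun i => α _ (l.args i)⟩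

/-- A homomorphism of formula graphs: a vertex map together with sort-indexed
substitutions fixing constants, compatible with the literal structure, and
preserving edges. -/
structure Hom {S : Signature} (G G' : FormulaGraph S) where
  h : Literal S → Literal S
  α : ∀ σ, S.Term σ → S.Term σ
  fixesConst : ∀ σ (c : S.Const σ), α σ (Sum.inl c) = Sum.inl c
  mapsV : ∀ l ∈ G.V, h l ∈ G'.V
  compat : ∀ l ∈ G.V, h l = Literal.map α l
  mapsE : ∀ R t, t ∈ G.E R → (fun i => h (t i)) ∈ G'.E R

/-- The identity homomorphism. -/
def Hom.id {S : Signature} (G : FormulaGraph S) : Hom G G where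
  h := fun l => l
  α := fun _ t => t
  fixesConst := fun _ _ => rfl
  mapsV := fun _ hl => hl
  compat := fun _ _ => rfl
  mapsE := fun _ _ ht => ht

/-- Composition of homomorphisms, componentwise. -/
def Hom.comp {S : Signature} {G G' G'' : FormulaGraph S}
    (f : Hom G G') (g : Hom G' G'') : Hom G G'' where
  h := fun l => g.h (f.h l)
  α := fun σ t => g.α σ (f.α σ t)
  fixesConst := fun σ c => (congrArg (g.α σ) (f.fixesConst σ c)).trans (g.fixesConst σ c)
  mapsV := fun l hl => g.mapsV _ (f.mapsV l hl)
  compat := by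
    intro l hl
    show g.h (f.h l) = Literal.map (fun σ t => g.α σ (f.α σ t)) l
    rw [g.compat _ (f.mapsV l hl), f.compat l hl]
    rfl
  mapsE := fun R t ht => g.mapsE R _ (f.mapsE R t ht)

/-- An embedding: a homomorphism injective on vertices with injective
substitutions. -/
def IsEmbedding {S : Signature} {G G' : FormulaGraph S} (f : Hom G G') : Prop :=
  Set.InjOn f.h G.V ∧ ∀ σ, Function.Injective (f.α σ)

/-- An isomorphism: a homomorphism with bijective components whose componentwise
inverses also form a homomorphism. -/
def IsIso {S : Signature} {G G' : FormulaGraph S} (f : Hom G G') : Prop :=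
  Set.BijOn f.h G.V G'.V ∧ (∀ σ, Function.Bijective (f.α σ)) ∧
  ∃ g : Hom G' G,
    (∀ l ∈ G.V, g.h (f.h l) = l) ∧ (∀ l ∈ G'.V, f.h (g.h l) = l) ∧
    (∀ σ t, g.α σ (f.α σ t) = t) ∧ (∀ σ t, f.α σ (g.α σ t) = t)

/-- Two formula graphs are isomorphic if there is an isomorphism between them. -/
def Iso {S : Signature} (G G' : FormulaGraph S) : Prop := ∃ f : Hom G G', IsIso f

/-- `G` can be embedded into `G'`. -/
def CanEmbed {S : Signature} (G G' : FormulaGraph S) : Prop :=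
  ∃ f : Hom G G', IsEmbedding f

end Signature


open Signature

section Aux

theorem exists_perm_extend {X : Type*} [Infinite X] {s : Set X} (hs : s.Finite)
    {φ : X → X} (hφ : Function.Injective φ) :
    ∃ π : Equiv.Perm X, ∀ x ∈ s, π x = φ x := by
  classical
  have hslt : (Cardinal.mk s) < Cardinal.mk X :=
    hs.lt_aleph0.trans_le (Cardinal.aleph0_le_mk X)
  have htlt : (Cardinal.mk (φ '' s)) < Cardinal.mk X :=
    (hs.image φ).lt_aleph0.trans_le (Cardinal.aleph0_le_mk X)
  obtain ⟨e2⟩ : Nonempty ((sᶜ : Set X) ≃ ((φ '' s)ᶜ : Set X)) :=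
    Cardinal.eq.mp (Cardinal.mk_compl_eq_mk_compl_infinite hslt htlt)
  let e1 : (s : Set X) ≃ (φ '' s : Set X) := Equiv.Set.image φ s hφ
  refine ⟨(Equiv.Set.sumCompl s).symm.trans ((e1.sumCongr e2).trans
    (Equiv.Set.sumCompl (φ '' s))), ?_⟩
  intro x hx
  simp [Equiv.Set.sumCompl_symm_apply_of_mem hx, e1]

variable {S : Signature}

theorem edge_finite (G : FormulaGraph S) (R : S.Rel) : (G.E R).Finite := by
  have hsub : (G.E R) ⊆ Set.pi Set.univ (fun _ : Fin (S.rarity R) => G.V) := by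
    intro t ht i _
    exact G.E_mem R t ht i
  exact (Set.Finite.pi fun _ => G.Vfin).subset hsub

/-- The set of terms of sort `σ` occurring as arguments of literals of `G`. -/
def argSet (G : FormulaGraph S) (σ : S.Srt) : Set (S.Term σ) :=
  {x | ∃ l ∈ G.V, ∃ i : Fin (S.parity l.pred), ∃ h : S.psort l.pred i = σ, h ▸ l.args i = x}

theorem mem_argSet {G : FormulaGraph S} {l : Literal S} (hl : l ∈ G.V)
    (i : Fin (S.parity l.pred)) : l.args i ∈ argSet G (S.psort l.pred i) :=
  ⟨l, hl, i, rfl, rfl⟩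

theorem argSet_finite (G : FormulaGraph S) (σ : S.Srt) : (argSet G σ).Finite := by
  have hsub : argSet G σ ⊆ ⋃ l ∈ G.V,
      Set.range (fun i : {i : Fin (S.parity l.pred) // S.psort l.pred i = σ} =>
        i.2 ▸ l.args i.1) := by
    rintro x ⟨l, hl, i, h, rfl⟩
    exact Set.mem_biUnion hl ⟨⟨i, h⟩, rfl⟩
  exact (G.Vfin.biUnion fun l _ => Set.finite_range _).subset hsub

theorem Literal.map_congr {α α' : ∀ σ, S.Term σ → S.Term σ} (l : Literal S)
    (h : ∀ i, α _ (l.args i) = α' _ (l.args i)) : l.map α = l.map α' := by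
  unfold Literal.map
  simp only [Literal.mk.injEq, heq_eq_eq, true_and]
  funext i
  exact h i

theorem Literal.map_inv (β γ : ∀ σ, S.Term σ → S.Term σ)
    (h : ∀ σ t, γ σ (β σ t) = t) (l : Literal S) :
    Literal.map γ (Literal.map β l) = l := by
  show Literal.mk l.pred l.pol (fun i => γ _ (β _ (l.args i))) = l
  simp only [h]

theorem iso_refl (G : FormulaGraph S) : Iso G G :=
  ⟨Hom.id G, Set.bijOn_id G.V, fun _ => Function.bijective_id,
    Hom.id G, fun _ _ => rfl, fun _ _ => rfl, fun _ _ => rfl, fun _ _ => rfl⟩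

theorem iso_symm {G G' : FormulaGraph S} (h : Iso G G') : Iso G' G := by
  obtain ⟨f, hb, hα, g, h1, h2, h3, h4⟩ := h
  refine ⟨g, ⟨fun l hl => g.mapsV l hl, ?_, ?_⟩, ?_, f, h2, h1, h4, h3⟩
  · intro a ha b hbm hab
    rw [← h2 a ha, ← h2 b hbm, hab]
  · intro l hl
    exact ⟨f.h l, f.mapsV l hl, h1 l hl⟩
  · intro σ
    exact Function.bijective_iff_has_inverse.mpr ⟨f.α σ, h4 σ, h3 σ⟩

theorem embedding_of_iso {G G' : FormulaGraph S} {f : Hom G G'} (h : IsIso f) :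
    IsEmbedding f :=
  ⟨h.1.injOn, fun σ => (h.2.1 σ).injective⟩

theorem embed_comp {G G' G'' : FormulaGraph S} {f : Hom G G'} {g : Hom G' G''}
    (hf : IsEmbedding f) (hg : IsEmbedding g) : IsEmbedding (f.comp g) :=
  ⟨hg.1.comp hf.1 f.mapsV, fun σ => (hg.2 σ).comp (hf.2 σ)⟩

theorem canEmbed_of_iso {G G' : FormulaGraph S} (h : Iso G G') : CanEmbed G G' :=
  h.imp fun _ hf => embedding_of_iso hf

theorem canEmbed_trans {G G' G'' : FormulaGraph S} (h : CanEmbed G G')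
    (h' : CanEmbed G' G'') : CanEmbed G G'' := by
  obtain ⟨f, hf⟩ := h
  obtain ⟨g, hg⟩ := h'
  exact ⟨f.comp g, embed_comp hf hg⟩

/-- Proposition 4: mutually embeddable formula graphs are isomorphic. -/
theorem mutual_iso {G G' : FormulaGraph S} (h1 : CanEmbed G G') (h2 : CanEmbed G' G) :
    Iso G G' := by
  classical
  obtain ⟨f, hfinj, hfα⟩ := h1
  obtain ⟨g, hginj, hgα⟩ := h2
  -- vertex bijectivity
  have hc' : Set.BijOn (fun l => f.h (g.h l)) G'.V G'.V :=
    (G'.Vfin.injOn_iff_bijOn_of_mapsTo (fun l hl => f.mapsV _ (g.mapsV l hl))).mp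
      (hfinj.comp hginj (fun l hl => g.mapsV l hl))
  have hfsurj : Set.SurjOn f.h G.V G'.V := by
    intro y hy
    obtain ⟨x, hx, hxy⟩ := hc'.surjOn hy
    exact ⟨g.h x, g.mapsV x hx, hxy⟩
  have hfbij : Set.BijOn f.h G.V G'.V := ⟨fun l hl => f.mapsV l hl, hfinj, hfsurj⟩
  -- edge surjectivity
  have hEsurj : ∀ R, Set.SurjOn (fun t (i : Fin (S.rarity R)) => f.h (t i))
      (G.E R) (G'.E R) := by
    intro R
    have hmap : Set.MapsTo (fun t (i : Fin (S.rarity R)) => f.h (g.h (t i)))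
        (G'.E R) (G'.E R) := fun t ht => f.mapsE R _ (g.mapsE R t ht)
    have hinj : Set.InjOn (fun t (i : Fin (S.rarity R)) => f.h (g.h (t i))) (G'.E R) := by
      intro t ht t' ht' hEq
      funext i
      have h1 : f.h (g.h (t i)) = f.h (g.h (t' i)) := congrFun hEq i
      have h2 := hfinj (g.mapsV _ (G'.E_mem R t ht i)) (g.mapsV _ (G'.E_mem R t' ht' i)) h1
      exact hginj (G'.E_mem R t ht i) (G'.E_mem R t' ht' i) h2
    have hbij := ((edge_finite G' R).injOn_iff_bijOn_of_mapsTo hmap).mp hinj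
    intro t ht
    obtain ⟨u, hu, huv⟩ := hbij.surjOn ht
    exact ⟨fun i => g.h (u i), g.mapsE R u hu, huv⟩
  -- the substitutions send variables to variables
  have key : ∀ σ (v : S.Var σ), ∃ w, f.α σ (Sum.inr v) = Sum.inr w := by
    intro σ v
    rcases h : f.α σ (Sum.inr v) with c | w
    · exact absurd (hfα σ (h.trans (f.fixesConst σ c).symm)) (by simp)
    · exact ⟨w, rfl⟩
  have φinj : ∀ σ, Function.Injective (fun v => (key σ v).choose) := by
    intro σ v v' h
    have hv := (key σ v).choose_spec
    have hv' := (key σ v').choose_spec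
    have heq : f.α σ (Sum.inr v) = f.α σ (Sum.inr v') := by
      rw [hv, hv']
      exact congrArg _ h
    exact Sum.inr_injective (hfα σ heq)
  -- variables occurring in G, per sort
  have hsfin : ∀ σ, {v : S.Var σ | (Sum.inr v : S.Term σ) ∈ argSet G σ}.Finite := by
    intro σ
    exact Set.Finite.preimage Sum.inr_injective.injOn (argSet_finite G σ)
  choose π hπ using fun σ =>
    @exists_perm_extend _ (S.varInfinite σ) _ (hsfin σ) _ (φinj σ)
  -- the corrected, bijective substitutions
  let β : ∀ σ, Equiv.Perm (S.Term σ) :=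
    fun σ => Equiv.sumCongr (Equiv.refl (S.Const σ)) (π σ)
  have hβA : ∀ σ, ∀ x ∈ argSet G σ, (β σ) x = f.α σ x := by
    intro σ x hx
    rcases x with c | v
    · exact (f.fixesConst σ c).symm
    · have hv := hπ σ v hx
      show Sum.inr (π σ v) = f.α σ (Sum.inr v)
      rw [hv]
      exact ((key σ v).choose_spec).symm
  -- the forward isomorphism
  let F : Hom G G' :=
    { h := f.h
      α := fun σ x => β σ x
      fixesConst := fun _ _ => rfl
      mapsV := f.mapsV
      compat := by
        intro l hl
        rw [f.compat l hl]
        exact (Literal.map_congr l fun i => (hβA _ _ (mem_argSet hl i))).symm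
      mapsE := f.mapsE }
  have Fcompat : ∀ l ∈ G.V, f.h l = Literal.map (fun σ x => β σ x) l := F.compat
  -- the inverse vertex map
  let hinv : Literal S → Literal S :=
    fun l' => if h : ∃ l ∈ G.V, f.h l = l' then h.choose else l'
  have hinv_left : ∀ l ∈ G.V, hinv (f.h l) = l := by
    intro l hl
    have hex : ∃ l0 ∈ G.V, f.h l0 = f.h l := ⟨l, hl, rfl⟩
    show dite _ _ _ = l
    rw [dif_pos hex]
    exact hfinj hex.choose_spec.1 hl hex.choose_spec.2
  have hinv_pos : ∀ l' ∈ G'.V, hinv l' ∈ G.V ∧ f.h (hinv l') = l' := by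
    intro l' hl'
    obtain ⟨l, hl, hfl⟩ := hfsurj hl'
    have hex : ∃ l0 ∈ G.V, f.h l0 = l' := ⟨l, hl, hfl⟩
    show (dite _ _ _ ∈ G.V) ∧ f.h (dite _ _ _) = l'
    rw [dif_pos hex]
    exact ⟨hex.choose_spec.1, hex.choose_spec.2⟩
  -- assemble the isomorphism
  refine ⟨F, hfbij, fun σ => (β σ).bijective, ?_⟩
  refine ⟨{ h := hinv
            α := fun σ x => (β σ).symm x
            fixesConst := fun σ c => ?_
            mapsV := fun l' hl' => (hinv_pos l' hl').1
            compat := ?_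
            mapsE := ?_ }, hinv_left, fun l' hl' => (hinv_pos l' hl').2,
          fun σ t => (β σ).symm_apply_apply t, fun σ t => (β σ).apply_symm_apply t⟩
  · show ((Equiv.refl (S.Const σ)).sumCongr (π σ)).symm (Sum.inl c) = Sum.inl c
    simp
  · intro l' hl'
    obtain ⟨hmem, hfl⟩ := hinv_pos l' hl'
    have he : l' = Literal.map (fun σ x => β σ x) (hinv l') := by
      conv_lhs => rw [← hfl]
      exact Fcompat _ hmem
    conv_rhs => rw [he]
    rw [Literal.map_inv _ _ (fun σ t => (β σ).symm_apply_apply t)]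
  · intro R t ht
    obtain ⟨u, hu, huv⟩ := hEsurj R ht
    have : (fun i => hinv (t i)) = u := by
      funext i
      rw [← huv]
      exact hinv_left (u i) (G.E_mem R u hu i)
    rw [this]
    exact hu

end Aux


open Signature in
/-- the sets of isomorphism classes of formula graphs embeddable into
`G` and into `G'` coincide iff `G` and `G'` are isomorphic. -/
theorem stmt11 (S : Signature) (G G' : FormulaGraph S) :
    (∀ H : FormulaGraph S,
        (∃ H', Iso H H' ∧ CanEmbed H' G) ↔ (∃ H', Iso H H' ∧ CanEmbed H' G')) ↔
      Iso G G' := by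
  constructor
  · intro hp
    obtain ⟨H1, hI1, hE1⟩ := (hp G).mp ⟨G, iso_refl G, canEmbed_of_iso (iso_refl G)⟩
    obtain ⟨H2, hI2, hE2⟩ := (hp G').mpr ⟨G', iso_refl G', canEmbed_of_iso (iso_refl G')⟩
    exact mutual_iso (canEmbed_trans (canEmbed_of_iso hI1) hE1)
      (canEmbed_trans (canEmbed_of_iso hI2) hE2)
  · intro hGG' H
    constructor
    · rintro ⟨H', hI, hE⟩
      exact ⟨H', hI, canEmbed_trans hE (canEmbed_of_iso hGG')⟩
    · rintro ⟨H', hI, hE⟩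
      exact ⟨H', hI, canEmbed_trans hE (canEmbed_of_iso (iso_symm hGG'))⟩
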